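/- arXiv:1610.00238 — 2 statements merged into one kernel-verified Lean document; each statement's English description precedes it below -/
import Mathlib

section
/- Let m ≥ 2, n ≥ 2, and let f be a maximal IC-coloring of K_{1(n),m} with vertices listed as u_1, …, u_{m+n} so that f(u_i) < f(u_{i+1}) for all i; set f_i = f(u_1) + ⋯ + f(u_i). Then f_i ≥ 3 · 2^{i−2} for every i with 2 ≤ i ≤ m+n. -/
/-- The join `H₀ ∨ H₁` of two graphs: all edges of `H₀`, all edges of `H₁`, and all
pairs with one endpoint in each. -/
def graphJoin {α β : Type*} (G : SimpleGraph α) (H : SimpleGraph β) :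
    SimpleGraph (α ⊕ β) where
  Adj x y :=
    match x, y with
    | Sum.inl a, Sum.inl b => G.Adj a b
    | Sum.inr a, Sum.inr b => H.Adj a b
    | Sum.inl _, Sum.inr _ => True
    | Sum.inr _, Sum.inl _ => True
  symm := by
    constructor
    rintro (a | a) (b | b) h
    · exact G.adj_symm h
    · trivial
    · trivial
    · exact H.adj_symm h
  loopless := by
    constructor
    rintro (a | a) h
    · exact G.loopless.irrefl a h
    · exact H.loopless.irrefl a h

/-- A coloring `f : V(G) → ℕ` (positive-valued) is an IC-coloring if every integer
`k` with `1 ≤ k ≤ f(G)` is the `f`-sum of some nonempty vertex subset inducing a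
connected subgraph. -/
def IsICColoring {α : Type*} [Fintype α] (G : SimpleGraph α) (f : α → ℕ) : Prop :=
  (∀ v, 0 < f v) ∧
    ∀ k : ℕ, 1 ≤ k → k ≤ ∑ v, f v →
      ∃ S : Finset α, S.Nonempty ∧ (G.induce (S : Set α)).Connected ∧
        ∑ v ∈ S, f v = k

/-- The IC-index `M(G)`: the maximum of `f(G)` over all IC-colorings `f` of `G`. -/
noncomputable def ICIndex {α : Type*} [Fintype α] (G : SimpleGraph α) : ℕ :=
  sSup {t | ∃ f : α → ℕ, IsICColoring G f ∧ ∑ v, f v = t}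

/-- `K_{1(n),m} = O_m ∨ K_n`: the complete `(n+1)`-partite graph with `n` parts of
size one and one part (`V₀ = Fin m`, the left summand) of size `m`. -/
def K1nm (m n : ℕ) : SimpleGraph (Fin m ⊕ Fin n) :=
  graphJoin (⊥ : SimpleGraph (Fin m)) (⊤ : SimpleGraph (Fin n))

-- binary representation sum
lemma sum_testBit (m : ℕ) : ∀ q, q < 2 ^ m →
    ∑ j ∈ Finset.range m, (if q.testBit j then 2 ^ j else 0) = q := by
  induction m with
  | zero => intro q hq; interval_cases q; simp
  | succ m ih =>
    intro q hq
    rw [Finset.sum_range_succ']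
    have h2 : ∑ j ∈ Finset.range m, (if q.testBit (j + 1) then 2 ^ (j + 1) else 0)
        = 2 * ∑ j ∈ Finset.range m, (if (q / 2).testBit j then 2 ^ j else 0) := by
      rw [Finset.mul_sum]
      refine Finset.sum_congr rfl fun j _ => ?_
      rw [Nat.testBit_succ]
      split <;> ring
    have hq2 : q / 2 < 2 ^ m := by
      have : 2 ^ (m + 1) = 2 * 2 ^ m := by ring
      omega
    rw [h2, ih _ hq2, Nat.testBit_zero]
    have := Nat.div_add_mod q 2
    have hmod : q % 2 = 0 ∨ q % 2 = 1 := by omega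
    rcases hmod with h | h <;> simp [h] <;> omega

-- adjacency to a clique vertex
lemma k1nm_adj_inr {m n : ℕ} (i : Fin n) (v : Fin m ⊕ Fin n) (h : v ≠ Sum.inr i) :
    (K1nm m n).Adj v (Sum.inr i) := by
  cases v with
  | inl a => trivial
  | inr b =>
    have hb : b ≠ i := fun hb => h (by rw [hb])
    exact hb

lemma connected_of_mem_inr {m n : ℕ} (S : Set (Fin m ⊕ Fin n)) (i : Fin n)
    (hi : Sum.inr i ∈ S) : ((K1nm m n).induce S).Connected := by
  rw [SimpleGraph.connected_iff]
  have key : ∀ x : S, ((K1nm m n).induce S).Reachable x ⟨Sum.inr i, hi⟩ := by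
    rintro ⟨v, hv⟩
    by_cases hvi : v = Sum.inr i
    · subst hvi; exact SimpleGraph.Reachable.refl _
    · exact SimpleGraph.Adj.reachable (by
        show (K1nm m n).Adj v (Sum.inr i)
        exact k1nm_adj_inr i v hvi)
  exact ⟨fun x y => (key x).trans (key y).symm, ⟨⟨Sum.inr i, hi⟩⟩⟩

-- the construction
def gcol (m n : ℕ) : Fin m ⊕ Fin n → ℕ := fun v =>
  match v with
  | Sum.inl j => 2 ^ (j : ℕ) * (2 ^ n - 1)
  | Sum.inr i => 2 ^ (i : ℕ)

lemma two_pow_sum (k : ℕ) : ∑ i ∈ Finset.range k, 2 ^ i = 2 ^ k - 1 := by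
  induction k with
  | zero => simp
  | succ k ih =>
    rw [Finset.sum_range_succ, ih]
    have h1 : (1:ℕ) ≤ 2 ^ k := Nat.one_le_two_pow
    have h2 : 2 ^ (k + 1) = 2 * 2 ^ k := by ring
    omega

lemma gcol_sum (m n : ℕ) : ∑ v, gcol m n v = 2 ^ m * (2 ^ n - 1) := by
  rw [Fintype.sum_sum_type]
  have hl : ∑ a : Fin m, gcol m n (Sum.inl a) = (2 ^ m - 1) * (2 ^ n - 1) := by
    show ∑ a : Fin m, 2 ^ (a : ℕ) * (2 ^ n - 1) = _
    rw [← Finset.sum_mul, Fin.sum_univ_eq_sum_range (fun j => 2 ^ j) m, two_pow_sum]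
  have hr : ∑ a : Fin n, gcol m n (Sum.inr a) = 2 ^ n - 1 := by
    show ∑ a : Fin n, 2 ^ (a : ℕ) = _
    rw [Fin.sum_univ_eq_sum_range (fun j => 2 ^ j) n, two_pow_sum]
  rw [hl, hr]
  have h1 : (1:ℕ) ≤ 2 ^ m := Nat.one_le_two_pow
  have h2 : (1:ℕ) ≤ 2 ^ n := Nat.one_le_two_pow
  obtain ⟨c, hc⟩ := Nat.exists_eq_add_of_le h1
  rw [hc]
  have hcc : 1 + c - 1 = c := by omega
  rw [hcc]; ring

lemma gcol_IC (m n : ℕ) (hn : 1 ≤ n) : IsICColoring (K1nm m n) (gcol m n) := by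
  classical
  have hd : 0 < 2 ^ n - 1 := by
    have : (2:ℕ) ^ 1 ≤ 2 ^ n := Nat.pow_le_pow_right (by norm_num) hn
    omega
  constructor
  · rintro (j | i)
    · exact Nat.mul_pos (Nat.pow_pos (by norm_num)) hd
    · exact Nat.pow_pos (by norm_num)
  · intro k hk1 hk2
    rw [gcol_sum] at hk2
    set d := 2 ^ n - 1 with hddef
    have hden : 2 ^ n = d + 1 := by omega
    set q := (k - 1) / d with hqdef
    set s := (k - 1) % d with hsdef
    set r := s + 1 with hrdef
    have hmodlt : s < d := Nat.mod_lt _ hd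
    have hq : q < 2 ^ m := by
      rw [hqdef, Nat.div_lt_iff_lt_mul hd]
      exact lt_of_lt_of_le (Nat.sub_lt hk1 one_pos) hk2
    have hrn : r < 2 ^ n := by omega
    have hqr : q * d + r = k := by
      have h := Nat.div_add_mod (k - 1) d
      calc q * d + (s + 1) = (d * q + s) + 1 := by ring
        _ = (k - 1) + 1 := by rw [h]
        _ = k := by omega
    set S : Finset (Fin m ⊕ Fin n) :=
      ((Finset.univ.filter (fun j : Fin m => q.testBit (j : ℕ))).image Sum.inl) ∪
      ((Finset.univ.filter (fun i : Fin n => r.testBit (i : ℕ))).image Sum.inr) with hS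
    have hrsum := sum_testBit n r hrn
    have hex : ∃ i, i ∈ Finset.range n ∧ r.testBit i := by
      by_contra hno
      push_neg at hno
      have hz : ∑ j ∈ Finset.range n, (if r.testBit j then 2 ^ j else 0) = 0 :=
        Finset.sum_eq_zero (fun j hj => by simp [hno j hj])
      rw [hz] at hrsum
      omega
    obtain ⟨i0, hi0n, hi0⟩ := hex
    have hIinS : Sum.inr (⟨i0, Finset.mem_range.mp hi0n⟩ : Fin n) ∈ S := by
      rw [hS]
      exact Finset.mem_union_right _ (Finset.mem_image.mpr
        ⟨_, Finset.mem_filter.mpr ⟨Finset.mem_univ _, hi0⟩, rfl⟩)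
    have hdisj : Disjoint
        ((Finset.univ.filter (fun j : Fin m => q.testBit (j : ℕ))).image Sum.inl)
        ((Finset.univ.filter (fun i : Fin n => r.testBit (i : ℕ))).image Sum.inr) := by
      rw [Finset.disjoint_left]
      rintro a ha hb
      obtain ⟨x, -, rfl⟩ := Finset.mem_image.mp ha
      obtain ⟨y, -, h⟩ := Finset.mem_image.mp hb
      exact absurd h (by simp)
    have hL : ∑ j ∈ Finset.univ.filter (fun j : Fin m => q.testBit (j : ℕ)),
        gcol m n (Sum.inl j) = q * d := by
      rw [Finset.sum_filter]
      have heq : ∀ j : Fin m, (if q.testBit (j : ℕ) then gcol m n (Sum.inl j) else 0)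
          = (if q.testBit (j : ℕ) then 2 ^ (j : ℕ) else 0) * d := by
        intro j
        by_cases h : q.testBit (j : ℕ) <;> simp [h, gcol, ← hddef]
      rw [Finset.sum_congr rfl (fun j _ => heq j), ← Finset.sum_mul,
        Fin.sum_univ_eq_sum_range (fun j => if q.testBit j then 2 ^ j else 0) m,
        sum_testBit m q hq]
    have hR : ∑ i ∈ Finset.univ.filter (fun i : Fin n => r.testBit (i : ℕ)),
        gcol m n (Sum.inr i) = r := by
      rw [Finset.sum_filter]
      have heq : ∀ i : Fin n, (if r.testBit (i : ℕ) then gcol m n (Sum.inr i) else 0)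
          = (if r.testBit (i : ℕ) then 2 ^ (i : ℕ) else 0) := by
        intro i
        by_cases h : r.testBit (i : ℕ) <;> simp [h, gcol]
      rw [Finset.sum_congr rfl (fun i _ => heq i),
        Fin.sum_univ_eq_sum_range (fun i => if r.testBit i then 2 ^ i else 0) n,
        sum_testBit n r hrn]
    refine ⟨S, ⟨_, hIinS⟩, connected_of_mem_inr _ _ (Finset.mem_coe.mpr hIinS), ?_⟩
    rw [hS, Finset.sum_union hdisj,
      Finset.sum_image (fun x _ y _ h => Sum.inl_injective h),
      Finset.sum_image (fun x _ y _ h => Sum.inr_injective h), hL, hR, hqr]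

lemma ic_sum_bound {α : Type*} [Fintype α] (G : SimpleGraph α) (f : α → ℕ)
    (hf : IsICColoring G f) : ∑ v, f v ≤ 2 ^ Fintype.card α := by
  classical
  set t := ∑ v, f v with ht
  have hchoose : ∀ k : ℕ, 1 ≤ k ∧ k ≤ t → ∃ S : Finset α, ∑ v ∈ S, f v = k := by
    rintro k ⟨h1, h2⟩
    obtain ⟨S, -, -, hS⟩ := hf.2 k h1 h2
    exact ⟨S, hS⟩
  set F : ℕ → Finset α := fun k =>
    if h : 1 ≤ k ∧ k ≤ t then (hchoose k h).choose else ∅ with hF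
  have hFs : ∀ k, 1 ≤ k → k ≤ t → ∑ v ∈ F k, f v = k := by
    intro k h1 h2
    rw [hF]
    simp only [dif_pos (And.intro h1 h2)]
    exact (hchoose k ⟨h1, h2⟩).choose_spec
  have hinj : Set.InjOn F ↑(Finset.Icc 1 t) := by
    intro a ha b hb hab
    simp only [Finset.coe_Icc, Set.mem_Icc] at ha hb
    have h := hFs a ha.1 ha.2
    rw [hab, hFs b hb.1 hb.2] at h
    omega
  have hcard := Finset.card_le_card_of_injOn F (fun a _ => Finset.mem_univ (F a)) hinj
  rw [Nat.card_Icc, Finset.card_univ, Fintype.card_finset] at hcard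
  omega


/-- Let `m, n ≥ 2` and `f` a maximal IC-coloring of `K_{1(n),m}`,
with vertices listed as `u 1, …, u (m+n)` so that `f` is strictly increasing along
the list; write `fᵢ = ∑_{k=1}^{i} f (u k)`.  Then `fᵢ ≥ 3 · 2^{i−2}` for all
`2 ≤ i ≤ m + n`. -/
theorem stmt_12 (m n : ℕ) (hm : 2 ≤ m) (hn : 2 ≤ n)
    (f : Fin m ⊕ Fin n → ℕ) (hf : IsICColoring (K1nm m n) f)
    (hmax : ∑ v, f v = ICIndex (K1nm m n))
    (u : ℕ → Fin m ⊕ Fin n) (hu : Set.BijOn u (Set.Icc 1 (m + n)) Set.univ)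
    (hmono : ∀ i, 1 ≤ i → i + 1 ≤ m + n → f (u i) < f (u (i + 1))) :
    ∀ i, 2 ≤ i → i ≤ m + n →
      3 * 2 ^ (i - 2) ≤ ∑ k ∈ Finset.Icc 1 i, f (u k) := by
  classical
  set N := m + n with hN
  obtain ⟨hpos, hrep⟩ := hf
  have hinjU : Set.InjOn u (Set.Icc 1 N) := hu.2.1
  have himg : (Finset.Icc 1 N).image u = Finset.univ := by
    apply Finset.eq_univ_of_forall
    intro v
    obtain ⟨k, hk, hkv⟩ := hu.2.2 (Set.mem_univ v)
    exact Finset.mem_image.mpr ⟨k, Finset.mem_Icc.mpr (Set.mem_Icc.mp hk), hkv⟩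
  have total_eq : ∑ v, f v = ∑ k ∈ Finset.Icc 1 N, f (u k) := by
    rw [← himg, Finset.sum_image (fun a ha b hb h =>
      hinjU (Set.mem_Icc.mpr (Finset.mem_Icc.mp ha))
        (Set.mem_Icc.mpr (Finset.mem_Icc.mp hb)) h)]
  have chain : ∀ a, 1 ≤ a → ∀ b, a ≤ b → b ≤ N → f (u a) ≤ f (u b) := by
    intro a ha b
    induction b with
    | zero => intro hab _; exact absurd hab (by omega)
    | succ b ih =>
      intro hab hbN
      rcases Nat.lt_or_ge a (b + 1) with h | h
      · exact le_trans (ih (by omega) (by omega))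
          (le_of_lt (hmono b (by omega) hbN))
      · have hab' : a = b + 1 := by omega
        rw [hab']
  have step : ∀ i, 1 ≤ i → i + 1 ≤ N →
      f (u (i + 1)) ≤ (∑ k ∈ Finset.Icc 1 i, f (u k)) + 1 := by
    intro i hi1 hiN
    set Fi := ∑ k ∈ Finset.Icc 1 i, f (u k) with hFi
    have hsplit : ∑ k ∈ Finset.Icc 1 (i + 1), f (u k) = Fi + f (u (i + 1)) :=
      Finset.sum_Icc_succ_top (by omega) _
    have hle : Fi + 1 ≤ ∑ v, f v := by
      rw [total_eq]
      have hsub : Finset.Icc 1 (i + 1) ⊆ Finset.Icc 1 N :=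
        Finset.Icc_subset_Icc_right hiN
      have hmono2 : (∑ k ∈ Finset.Icc 1 (i + 1), f (u k)) ≤ ∑ k ∈ Finset.Icc 1 N, f (u k) :=
        Finset.sum_le_sum_of_subset hsub
      have hp := hpos (u (i + 1))
      omega
    obtain ⟨S, hSne, -, hSsum⟩ := hrep (Fi + 1) (by omega) hle
    by_cases hsub : S ⊆ (Finset.Icc 1 i).image u
    · exfalso
      have h1 : ∑ v ∈ S, f v ≤ ∑ v ∈ (Finset.Icc 1 i).image u, f v :=
        Finset.sum_le_sum_of_subset hsub
      have h2 : ∑ v ∈ (Finset.Icc 1 i).image u, f v = Fi := by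
        rw [Finset.sum_image (fun a ha b hb h =>
          hinjU (Set.mem_Icc.mpr ⟨(Finset.mem_Icc.mp ha).1,
            le_trans (Finset.mem_Icc.mp ha).2 (by omega)⟩)
            (Set.mem_Icc.mpr ⟨(Finset.mem_Icc.mp hb).1,
              le_trans (Finset.mem_Icc.mp hb).2 (by omega)⟩) h)]
      omega
    · obtain ⟨v, hvS, hvn⟩ := Finset.not_subset.mp hsub
      obtain ⟨j, hjmem, hjv⟩ := hu.2.2 (Set.mem_univ v)
      obtain ⟨hj1, hjN⟩ := Set.mem_Icc.mp hjmem
      have hji : i + 1 ≤ j := by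
        by_contra h
        push_neg at h
        exact hvn (Finset.mem_image.mpr ⟨j, Finset.mem_Icc.mpr ⟨hj1, by omega⟩, hjv⟩)
      have h1 : f (u (i + 1)) ≤ f (u j) := chain (i + 1) (by omega) j hji hjN
      have h2 : f v ≤ ∑ w ∈ S, f w :=
        Finset.single_le_sum (fun w _ => Nat.zero_le _) hvS
      rw [hjv] at h1
      omega
  have hlow : 3 * 2 ^ (N - 2) ≤ ∑ v, f v := by
    have hmem : (2 ^ m * (2 ^ n - 1)) ∈
        {t | ∃ g : Fin m ⊕ Fin n → ℕ, IsICColoring (K1nm m n) g ∧ ∑ v, g v = t} :=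
      ⟨gcol m n, gcol_IC m n (by omega), gcol_sum m n⟩
    have hbdd : BddAbove
        {t | ∃ g : Fin m ⊕ Fin n → ℕ, IsICColoring (K1nm m n) g ∧ ∑ v, g v = t} := by
      refine ⟨2 ^ (m + n), ?_⟩
      rintro t ⟨g, hg, rfl⟩
      have hb := ic_sum_bound (K1nm m n) g hg
      simpa [Fintype.card_sum] using hb
    have h1 : 2 ^ m * (2 ^ n - 1) ≤ ICIndex (K1nm m n) := le_csSup hbdd hmem
    rw [hmax]
    refine le_trans ?_ h1
    have e1 : 2 ^ (m + n) = 4 * 2 ^ (N - 2) := by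
      rw [show m + n = (N - 2) + 2 by omega]; ring
    have e2 : 2 ^ m * (2 ^ n - 1) = 2 ^ (m + n) - 2 ^ m := by
      rw [Nat.mul_sub, pow_add]; ring_nf
    have e3 : 2 ^ m ≤ 2 ^ (N - 2) := Nat.pow_le_pow_right (by norm_num) (by omega)
    rw [e2]
    omega
  have main : ∀ dd i, i + dd = N → 2 ≤ i →
      3 * 2 ^ (i - 2) ≤ ∑ k ∈ Finset.Icc 1 i, f (u k) := by
    intro dd
    induction dd with
    | zero =>
      intro i h hi2
      have hiN : i = N := by omega
      subst hiN
      rw [← total_eq]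
      exact hlow
    | succ dd ih =>
      intro i h hi2
      have hstep := step i (by omega) (by omega)
      have hsplit : ∑ k ∈ Finset.Icc 1 (i + 1), f (u k)
          = (∑ k ∈ Finset.Icc 1 i, f (u k)) + f (u (i + 1)) :=
        Finset.sum_Icc_succ_top (by omega) _
      have hih := ih (i + 1) (by omega) (by omega)
      have hp2 : 2 ^ (i + 1 - 2) = 2 * 2 ^ (i - 2) := by
        rw [show i + 1 - 2 = (i - 2) + 1 by omega]; ring
      rw [hp2] at hih
      omega
  intro i hi2 hiN
  exact main (N - i) i (by omega) hi2
end

section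
/- Let m ≥ 2, n ≥ 2, and let f be a maximal IC-coloring of K_{1(n),m} with vertices listed as u_1, …, u_{m+n} so that f(u_i) < f(u_{i+1}) for all i; set f_0 = 0, f_i = f(u_1) + ⋯ + f(u_i), s_0 = 0, s_i = f(u_i), r_i = s_i − ∑_{j=0}^{i−1} s_j, and k_0 = max{ j : u_j ∈ V_0 }. Suppose S_1 = { i < k_0 : r_i = 1 and u_i ∈ V_0 } is nonempty; let i_1 = min S_1, t = |{ i < i_1 : u_i ∈ V_0 }|, and S_2 = { i ≥ i_1 + 1 : u_i ∈ V_0 and f(u_i) > f_{i−1} − f(u_{i_1}) }. If S_2 is empty, then f(K_{1(n),m}) ≤ 2^{m+n} − 2^m + 1. -/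
private def Fsum {V : Type*} (f : V → ℕ) (u : ℕ → V) (i : ℕ) : ℕ :=
  ∑ k ∈ Finset.Icc 1 i, f (u k)

private def cnt (P : ℕ → Prop) [DecidablePred P] (i : ℕ) : ℕ :=
  ((Finset.Icc 1 i).filter P).card

private lemma Fsum_zero {V : Type*} (f : V → ℕ) (u : ℕ → V) : Fsum f u 0 = 0 := by
  unfold Fsum; simp

private lemma Fsum_succ {V : Type*} (f : V → ℕ) (u : ℕ → V) (i : ℕ) :
    Fsum f u (i + 1) = Fsum f u i + f (u (i + 1)) := by
  unfold Fsum
  rw [← Finset.insert_Icc_right_eq_Icc_add_one (by omega), Finset.sum_insert (by rw [Finset.mem_Icc]; omega)]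
  exact Nat.add_comm _ _

private lemma cnt_zero (P : ℕ → Prop) [DecidablePred P] : cnt P 0 = 0 := by
  unfold cnt; simp

private lemma cnt_succ (P : ℕ → Prop) [DecidablePred P] (i : ℕ) :
    cnt P (i + 1) = if P (i + 1) then cnt P i + 1 else cnt P i := by
  unfold cnt
  rw [← Finset.insert_Icc_right_eq_Icc_add_one (by omega), Finset.filter_insert]
  split
  · rw [Finset.card_insert_of_notMem
      (fun h => absurd (Finset.mem_Icc.mp (Finset.mem_filter.mp h).1).2 (by omega))]
  · rfl
/-- Setting as in Statement 14, suppose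
`S₁ = { i < k₀ : r i = 1 and u i ∈ V₀ }` is nonempty, with minimum `i₁`, and let
`S₂ = { i ≥ i₁ + 1 : u i ∈ V₀ and f (u i) > f_{i−1} − f (u i₁) }`.
If `S₂ = ∅`, then `f(K_{1(n),m}) ≤ 2^{m+n} − 2^m + 1`. -/
theorem stmt_15 (m n : ℕ) (hm : 2 ≤ m) (hn : 2 ≤ n)
    (f : Fin m ⊕ Fin n → ℕ) (hf : IsICColoring (K1nm m n) f)
    (hmax : ∑ v, f v = ICIndex (K1nm m n))
    (u : ℕ → Fin m ⊕ Fin n) (hu : Set.BijOn u (Set.Icc 1 (m + n)) Set.univ)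
    (hmono : ∀ i, 1 ≤ i → i + 1 ≤ m + n → f (u i) < f (u (i + 1)))
    (s r : ℕ → ℤ) (hs0 : s 0 = 0)
    (hs : ∀ i, 1 ≤ i → i ≤ m + n → s i = f (u i))
    (hr : ∀ i, 1 ≤ i → i ≤ m + n → r i = s i - ∑ j ∈ Finset.range i, s j)
    (k₀ : ℕ) (hk₀mem : 1 ≤ k₀ ∧ k₀ ≤ m + n ∧ (u k₀).isLeft = true)
    (hk₀max : ∀ j, 1 ≤ j → j ≤ m + n → (u j).isLeft = true → j ≤ k₀)
    (i₁ : ℕ)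
    (hi₁mem : 1 ≤ i₁ ∧ i₁ < k₀ ∧ r i₁ = 1 ∧ (u i₁).isLeft = true)
    (hi₁min : ∀ j, 1 ≤ j → j < k₀ → r j = 1 → (u j).isLeft = true → i₁ ≤ j)
    (hS₂empty : ∀ i, i₁ + 1 ≤ i → i ≤ m + n → (u i).isLeft = true →
      (f (u i) : ℤ) ≤ (∑ k ∈ Finset.Icc 1 (i - 1), (f (u k) : ℤ)) - f (u i₁)) :
    ∑ v, f v ≤ 2 ^ (m + n) - 2 ^ m + 1 := by
  obtain ⟨hfpos, hfIC⟩ := hf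
  obtain ⟨hk₀1, hk₀N, hk₀L⟩ := hk₀mem
  obtain ⟨hi₁1, hi₁k₀, hri₁, hi₁L⟩ := hi₁mem
  have hi₁N : i₁ < m + n := lt_of_lt_of_le hi₁k₀ hk₀N
  -- monotonicity of f ∘ u
  have hmono' : ∀ j i, 1 ≤ i → i ≤ j → j ≤ m + n → f (u i) ≤ f (u j) := by
    intro j
    induction j with
    | zero => intro i h1 h2 _; omega
    | succ j ih =>
      intro i h1 h2 h3
      rcases eq_or_lt_of_le h2 with h | h
      · rw [h]
      · exact le_trans (ih i h1 (by omega) (by omega))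
          (le_of_lt (hmono j (by omega) h3))
  -- key bound (A)
  have hA : ∀ i, 1 ≤ i → i ≤ m + n → f (u i) ≤ Fsum f u (i - 1) + 1 := by
    intro i h1 hN
    by_contra hcon
    push_neg at hcon
    have hk1 : 1 ≤ f (u i) - 1 := by omega
    have hk2 : f (u i) - 1 ≤ ∑ v, f v := by
      have : f (u i) ≤ ∑ v, f v :=
        Finset.single_le_sum (fun v _ => Nat.zero_le _) (Finset.mem_univ _)
      omega
    obtain ⟨S, -, -, hSsum⟩ := hfIC _ hk1 hk2
    have hsub : S ⊆ (Finset.Icc 1 (i - 1)).image u := by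
      intro v hv
      have hvle : f v ≤ f (u i) - 1 := by
        rw [← hSsum]
        exact Finset.single_le_sum (fun w _ => Nat.zero_le _) hv
      obtain ⟨j, hj, rfl⟩ := hu.surjOn (Set.mem_univ v)
      rw [Set.mem_Icc] at hj
      have hji : j ≤ i - 1 := by
        by_contra hji
        have h2 : f (u i) ≤ f (u j) := hmono' j i h1 (by omega) hj.2
        have h3 : 0 < f (u i) := hfpos _
        omega
      exact Finset.mem_image.mpr ⟨j, Finset.mem_Icc.mpr ⟨hj.1, hji⟩, rfl⟩
    have hinc : ∀ x ∈ Finset.Icc 1 (i - 1), x ∈ Set.Icc 1 (m + n) := by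
      intro x hx
      rw [Finset.mem_Icc] at hx
      exact Set.mem_Icc.mpr ⟨hx.1, by omega⟩
    have hle : ∑ v ∈ S, f v ≤ ∑ v ∈ (Finset.Icc 1 (i - 1)).image u, f v :=
      Finset.sum_le_sum_of_subset hsub
    rw [Finset.sum_image (fun x hx y hy h => hu.injOn (hinc x hx) (hinc y hy) h)] at hle
    have hle2 : ∑ v ∈ S, f v ≤ Fsum f u (i - 1) := hle
    omega
  -- the sum of s over range i
  have hFr : ∀ i, 1 ≤ i → i ≤ m + n →
      ∑ j ∈ Finset.range i, s j = (Fsum f u (i - 1) : ℤ) := by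
    intro i h1 h2
    obtain ⟨k, rfl⟩ : ∃ k, i = k + 1 := ⟨i - 1, by omega⟩
    rw [Finset.sum_range_succ', hs0, add_zero]
    simp only [Nat.add_sub_cancel]
    unfold Fsum
    push_cast
    rw [← Finset.Ico_add_one_right_eq_Icc, Finset.sum_Ico_eq_sum_range]
    apply Finset.sum_congr rfl
    intro j hj
    rw [Finset.mem_range] at hj
    rw [add_comm 1 j]
    exact hs (j + 1) (by omega) (by omega)
  have hrval : ∀ i, 1 ≤ i → i ≤ m + n →
      r i = (f (u i) : ℤ) - (Fsum f u (i - 1) : ℤ) := by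
    intro i h1 h2
    rw [hr i h1 h2, hs i h1 h2, hFr i h1 h2]
  -- bound (B) for V₀ vertices before i₁
  have hB : ∀ i, 1 ≤ i → i < i₁ → (u i).isLeft = true → f (u i) ≤ Fsum f u (i - 1) := by
    intro i h1 h2 hL
    have hiN : i ≤ m + n := by omega
    have hr1 := hrval i h1 hiN
    have hAi := hA i h1 hiN
    have hne : r i ≠ 1 := fun hq => absurd (hi₁min i h1 (by omega) hq hL) (by omega)
    omega
  -- bound (C) for V₀ vertices after i₁
  have hC : ∀ i, i₁ < i → i ≤ m + n → (u i).isLeft = true →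
      (f (u i) : ℤ) ≤ (Fsum f u (i - 1) : ℤ) - 1 := by
    intro i h1 h2 hL
    have h := hS₂empty i (by omega) h2 hL
    have hcast : (∑ k ∈ Finset.Icc 1 (i - 1), (f (u k) : ℤ)) = (Fsum f u (i - 1) : ℤ) := by
      unfold Fsum; push_cast; ring
    have hpos : 1 ≤ (f (u i₁) : ℤ) := by exact_mod_cast hfpos (u i₁)
    rw [hcast] at h
    linarith
  -- the two counters
  have hD0 : ∀ i, i < i₁ → cnt (fun j => i₁ < j ∧ (u j).isLeft = true) i = 0 := by
    intro i hi
    unfold cnt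
    rw [Finset.card_eq_zero, Finset.filter_eq_empty_iff]
    intro j hj
    rw [Finset.mem_Icc] at hj
    intro hcon
    omega
  -- main induction
  have main : ∀ i, i ≤ m + n →
      (Fsum f u i : ℤ) +
        (if i < i₁ then 2 ^ (cnt (fun j => j < i₁ ∧ (u j).isLeft = true) i) - 1
         else 2 ^ (cnt (fun j => j < i₁ ∧ (u j).isLeft = true) i + 1 +
                   cnt (fun j => i₁ < j ∧ (u j).isLeft = true) i) - 2)
        ≤ 2 ^ i - 1 := by
    intro i
    induction i with
    | zero =>
      intro _
      rw [if_pos (by omega : 0 < i₁), Fsum_zero, cnt_zero]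
      norm_num
    | succ i ih =>
      intro hiN
      have ih' := ih (by omega)
      have hFs := Fsum_succ f u i
      have hTs := cnt_succ (fun j => j < i₁ ∧ (u j).isLeft = true) i
      have hDs := cnt_succ (fun j => i₁ < j ∧ (u j).isLeft = true) i
      set T := cnt (fun j => j < i₁ ∧ (u j).isLeft = true) with hTdef
      set D := cnt (fun j => i₁ < j ∧ (u j).isLeft = true) with hDdef
      by_cases h1 : i + 1 < i₁
      · rw [if_pos h1]
        rw [if_pos (by omega)] at ih'
        have hDd : D (i + 1) = D i := by
          rw [hDs, if_neg (fun h => by omega)]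
        by_cases hL : (u (i + 1)).isLeft = true
        · have hTeq : T (i + 1) = T i + 1 := by rw [hTs, if_pos ⟨h1, hL⟩]
          have hb := hB (i + 1) (by omega) h1 hL
          simp only [Nat.add_sub_cancel] at hb
          rw [hFs, hTeq]
          push_cast
          rw [pow_succ, pow_succ]
          have hbz : (f (u (i + 1)) : ℤ) ≤ (Fsum f u i : ℤ) := by exact_mod_cast hb
          linarith
        · have hTeq : T (i + 1) = T i := by rw [hTs, if_neg (fun h => hL h.2)]
          have ha := hA (i + 1) (by omega) hiN
          simp only [Nat.add_sub_cancel] at ha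
          have haz : (f (u (i + 1)) : ℤ) ≤ (Fsum f u i : ℤ) + 1 := by exact_mod_cast ha
          have hp1 : (1 : ℤ) ≤ 2 ^ T i := one_le_pow₀ (by norm_num)
          rw [hFs, hTeq]
          push_cast
          rw [pow_succ]
          linarith
      · rw [if_neg h1]
        by_cases h2 : i + 1 = i₁
        · -- step at i₁
          rw [if_pos (by omega)] at ih'
          have hTeq : T (i + 1) = T i := by rw [hTs, if_neg (fun h => by omega)]
          have hDeq : D (i + 1) = D i := by rw [hDs, if_neg (fun h => by omega)]
          have hD0' : D i = 0 := hD0 i (by omega)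
          have ha := hA (i + 1) (by omega) hiN
          simp only [Nat.add_sub_cancel] at ha
          have haz : (f (u (i + 1)) : ℤ) ≤ (Fsum f u i : ℤ) + 1 := by exact_mod_cast ha
          rw [hFs, hTeq, hDeq, hD0', Nat.add_zero]
          push_cast
          rw [pow_succ, pow_succ]
          linarith
        · have hii : i₁ < i + 1 := by omega
          rw [if_neg (by omega)] at ih'
          have hTeq : T (i + 1) = T i := by rw [hTs, if_neg (fun h => by omega)]
          by_cases hL : (u (i + 1)).isLeft = true
          · have hDeq : D (i + 1) = D i + 1 := by rw [hDs, if_pos ⟨hii, hL⟩]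
            have hc := hC (i + 1) hii hiN hL
            simp only [Nat.add_sub_cancel] at hc
            rw [hFs, hTeq, hDeq]
            push_cast
            have he : T i + 1 + (D i + 1) = (T i + 1 + D i) + 1 := by omega
            rw [he, pow_succ, pow_succ]
            linarith
          · have hDeq : D (i + 1) = D i := by rw [hDs, if_neg (fun h => hL h.2)]
            have ha := hA (i + 1) (by omega) hiN
            simp only [Nat.add_sub_cancel] at ha
            have haz : (f (u (i + 1)) : ℤ) ≤ (Fsum f u i : ℤ) + 1 := by exact_mod_cast ha
            have hp2 : (2 : ℤ) ≤ 2 ^ (T i + 1 + D i) := by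
              calc (2 : ℤ) = 2 ^ 1 := rfl
              _ ≤ 2 ^ (T i + 1 + D i) := pow_le_pow_right₀ (by norm_num) (by omega)
            rw [hFs, hTeq, hDeq]
            push_cast
            rw [pow_succ]
            linarith
  -- counting the left vertices
  have hW : ((Finset.Icc 1 (m + n)).filter (fun j => (u j).isLeft = true)).card = m := by
    have h1 : ((Finset.univ : Finset (Fin m ⊕ Fin n)).filter (fun v => v.isLeft = true)) =
        Finset.univ.map ⟨Sum.inl, Sum.inl_injective⟩ := by
      ext v
      cases v <;> simp
    have h2 : ((Finset.Icc 1 (m + n)).filter (fun j => (u j).isLeft = true)).card =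
        ((Finset.univ : Finset (Fin m ⊕ Fin n)).filter (fun v => v.isLeft = true)).card := by
      apply Finset.card_bij (fun j _ => u j)
      · intro a ha
        rw [Finset.mem_filter] at ha ⊢
        exact ⟨Finset.mem_univ _, ha.2⟩
      · intro a ha b hb hab
        rw [Finset.mem_filter, Finset.mem_Icc] at ha hb
        exact hu.injOn (Set.mem_Icc.mpr ha.1) (Set.mem_Icc.mpr hb.1) hab
      · intro v hv
        rw [Finset.mem_filter] at hv
        obtain ⟨j, hj, rfl⟩ := hu.surjOn (Set.mem_univ v)
        exact ⟨j, Finset.mem_filter.mpr ⟨Finset.mem_Icc.mpr (Set.mem_Icc.mp hj), hv.2⟩, rfl⟩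
    rw [h2, h1, Finset.card_map, Finset.card_univ, Fintype.card_fin]
  have hTD : m ≤ cnt (fun j => j < i₁ ∧ (u j).isLeft = true) (m + n) + 1 +
      cnt (fun j => i₁ < j ∧ (u j).isLeft = true) (m + n) := by
    have hsub : (Finset.Icc 1 (m + n)).filter (fun j => (u j).isLeft = true) ⊆
        (((Finset.Icc 1 (m + n)).filter (fun j => j < i₁ ∧ (u j).isLeft = true)) ∪
         ((Finset.Icc 1 (m + n)).filter (fun j => i₁ < j ∧ (u j).isLeft = true))) ∪ {i₁} := by
      intro j hj
      rw [Finset.mem_filter] at hj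
      simp only [Finset.mem_union, Finset.mem_filter, Finset.mem_singleton]
      rcases lt_trichotomy j i₁ with h | h | h
      · exact Or.inl (Or.inl ⟨hj.1, h, hj.2⟩)
      · exact Or.inr h
      · exact Or.inl (Or.inr ⟨hj.1, h, hj.2⟩)
    have hc1 := Finset.card_le_card hsub
    have hc2 := Finset.card_union_le
      ((((Finset.Icc 1 (m + n)).filter (fun j => j < i₁ ∧ (u j).isLeft = true)) ∪
        ((Finset.Icc 1 (m + n)).filter (fun j => i₁ < j ∧ (u j).isLeft = true))))
      ({i₁} : Finset ℕ)
    have hc3 := Finset.card_union_le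
      ((Finset.Icc 1 (m + n)).filter (fun j => j < i₁ ∧ (u j).isLeft = true))
      ((Finset.Icc 1 (m + n)).filter (fun j => i₁ < j ∧ (u j).isLeft = true))
    rw [hW] at hc1
    simp only [Finset.card_singleton] at hc2
    unfold cnt
    omega
  -- assemble
  have hmain := main (m + n) le_rfl
  rw [if_neg (by omega)] at hmain
  have hsum : Fsum f u (m + n) = ∑ v, f v := by
    unfold Fsum
    apply Finset.sum_bij (fun j _ => u j)
    · intro a _
      exact Finset.mem_univ _
    · intro a ha b hb hab
      rw [Finset.mem_Icc] at ha hb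
      exact hu.injOn (Set.mem_Icc.mpr ha) (Set.mem_Icc.mpr hb) hab
    · intro v _
      obtain ⟨j, hj, rfl⟩ := hu.surjOn (Set.mem_univ v)
      exact ⟨j, Finset.mem_Icc.mpr (Set.mem_Icc.mp hj), rfl⟩
    · intro a _
      rfl
  have hpow : (2 : ℤ) ^ m ≤ 2 ^ (cnt (fun j => j < i₁ ∧ (u j).isLeft = true) (m + n) + 1 +
      cnt (fun j => i₁ < j ∧ (u j).isLeft = true) (m + n)) :=
    pow_le_pow_right₀ (by norm_num) hTD
  have h2 : (2 : ℕ) ^ m ≤ 2 ^ (m + n) := Nat.pow_le_pow_right (by norm_num) (by omega)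
  have hfinal : ((∑ v, f v : ℕ) : ℤ) ≤ 2 ^ (m + n) - 2 ^ m + 1 := by
    rw [← hsum]
    linarith
  zify [h2]
  push_cast at hfinal ⊢
  linarith
end
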